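/- Let m > 0 and define g : (0,1) → ℝ by g(x) = |ln x|^{1/m}, with (0,1) equipped with Lebesgue measure. Then there exist constants 0 < c ≤ C < ∞ such that c·p^{1/m} ≤ (∫₀¹ g(x)^p dx)^{1/p} ≤ C·p^{1/m} for all p ≥ 2; in particular sup_{p ≥ 2} |g|_p/p^{1/m} < ∞ while |g|_p/p^{1/m} does not tend to 0 as p → ∞. -/

import Mathlib

open MeasureTheory Filter Set intervalIntegral
open scoped ENNReal Topology

-- key reduction of eLpNorm to a lintegral
lemma stmt11_key (m p : ℝ) (hm : 0 < m) (hp : 0 < p) :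
    eLpNorm (fun x : ℝ => |Real.log x| ^ (1/m)) (ENNReal.ofReal p)
        (volume.restrict (Set.Ioo (0:ℝ) 1))
      = (∫⁻ x in Set.Ioo (0:ℝ) 1, ENNReal.ofReal (|Real.log x| ^ (p/m))) ^ (1/p) := by
  rw [eLpNorm_eq_lintegral_rpow_enorm_toReal (by simpa using hp) ENNReal.ofReal_ne_top,
    ENNReal.toReal_ofReal hp.le]
  congr 1
  refine lintegral_congr fun x => ?_
  rw [Real.enorm_eq_ofReal (Real.rpow_nonneg (abs_nonneg _) _),
    ENNReal.ofReal_rpow_of_nonneg (Real.rpow_nonneg (abs_nonneg _) _) hp.le,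
    ← Real.rpow_mul (abs_nonneg _)]
  congr 2
  field_simp

lemma stmt11_lower_int (m p : ℝ) (hm : 0 < m) (hp : 0 < p) :
    ENNReal.ofReal (p ^ (p/m) * Real.exp (-p)) ≤
      ∫⁻ x in Set.Ioo (0:ℝ) 1, ENNReal.ofReal (|Real.log x| ^ (p/m)) := by
  have hsub : Set.Ioo (0:ℝ) (Real.exp (-p)) ⊆ Set.Ioo 0 1 := by
    apply Set.Ioo_subset_Ioo le_rfl
    exact (Real.exp_lt_one_iff.2 (by linarith)).le
  have hmeas : Measurable fun x : ℝ => ENNReal.ofReal (|Real.log x| ^ (p/m)) := by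
    exact (Real.measurable_log.abs.pow_const _).ennreal_ofReal
  calc ENNReal.ofReal (p ^ (p/m) * Real.exp (-p))
      = ENNReal.ofReal (p ^ (p/m)) * volume (Set.Ioo (0:ℝ) (Real.exp (-p))) := by
        rw [Real.volume_Ioo, ENNReal.ofReal_mul (Real.rpow_nonneg hp.le _)]
        ring_nf
    _ = ∫⁻ _ in Set.Ioo (0:ℝ) (Real.exp (-p)), ENNReal.ofReal (p ^ (p/m)) := by
        rw [setLIntegral_const]
    _ ≤ ∫⁻ x in Set.Ioo (0:ℝ) (Real.exp (-p)), ENNReal.ofReal (|Real.log x| ^ (p/m)) := by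
        refine setLIntegral_mono hmeas fun x hx => ?_
        refine ENNReal.ofReal_le_ofReal ?_
        refine Real.rpow_le_rpow hp.le ?_ (by positivity)
        have hlt : Real.log x < -p := by
          calc Real.log x < Real.log (Real.exp (-p)) :=
                Real.log_lt_log hx.1 hx.2
            _ = -p := Real.log_exp _
        rw [abs_of_neg (by linarith)]
        linarith
    _ ≤ ∫⁻ x in Set.Ioo (0:ℝ) 1, ENNReal.ofReal (|Real.log x| ^ (p/m)) :=
        lintegral_mono_set hsub

lemma stmt11_upper_int (m p : ℝ) (hm : 0 < m) (hp : 0 < p) :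
    (∫⁻ x in Set.Ioo (0:ℝ) 1, ENNReal.ofReal (|Real.log x| ^ (p/m))) ≤
      ENNReal.ofReal ((2 * (p/m)) ^ (p/m) * 2) := by
  set q : ℝ := p/m with hq
  have hq0 : 0 < q := div_pos hp hm
  have hε : (0:ℝ) < 1/(2*q) := by positivity
  -- pointwise bound
  have hpt : ∀ x ∈ Set.Ioo (0:ℝ) 1,
      |Real.log x| ^ q ≤ (2*q) ^ q * x ^ (-(1/2) : ℝ) := by
    intro x hx
    have hx0 : 0 < x := hx.1
    have h1 : |Real.log x| = Real.log x⁻¹ := by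
      rw [Real.log_inv, abs_of_nonpos (Real.log_nonpos hx0.le hx.2.le)]
    have h2 : Real.log x⁻¹ ≤ (x⁻¹) ^ (1/(2*q)) * (2*q) := by
      have := Real.log_le_rpow_div (by positivity : (0:ℝ) ≤ x⁻¹) hε
      calc Real.log x⁻¹ ≤ (x⁻¹) ^ (1/(2*q)) / (1/(2*q)) := this
        _ = (x⁻¹) ^ (1/(2*q)) * (2*q) := by field_simp
    calc |Real.log x| ^ q ≤ ((x⁻¹) ^ (1/(2*q)) * (2*q)) ^ q := by
          refine Real.rpow_le_rpow (abs_nonneg _) ?_ hq0.le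
          rw [h1]; exact h2
      _ = (2*q) ^ q * x ^ (-(1/2) : ℝ) := by
          rw [Real.mul_rpow (by positivity) (by positivity), mul_comm,
            ← Real.rpow_mul (by positivity : (0:ℝ) ≤ x⁻¹)]
          congr 1
          rw [show (1/(2*q))*q = (1/2 : ℝ) by field_simp,
            Real.inv_rpow hx0.le, ← Real.rpow_neg hx0.le]
  -- integral of x ^ (-1/2) over (0,1)
  have hint : IntegrableOn (fun x : ℝ => x ^ (-(1/2) : ℝ)) (Set.Ioo 0 1) volume := by
    have h := intervalIntegrable_rpow' (a := 0) (b := 1) (r := -(1/2)) (by norm_num)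
    exact (h.1).mono_set Set.Ioo_subset_Ioc_self
  have hval : ∫ x in Set.Ioo (0:ℝ) 1, x ^ (-(1/2) : ℝ) = 2 := by
    rw [← MeasureTheory.integral_Ioc_eq_integral_Ioo,
      ← integral_of_le zero_le_one,
      integral_rpow (Or.inl (by norm_num))]
    rw [Real.one_rpow, Real.zero_rpow (by norm_num)]
    norm_num
  calc (∫⁻ x in Set.Ioo (0:ℝ) 1, ENNReal.ofReal (|Real.log x| ^ q))
      ≤ ∫⁻ x in Set.Ioo (0:ℝ) 1, ENNReal.ofReal ((2*q) ^ q) * ENNReal.ofReal (x ^ (-(1/2):ℝ)) := by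
        refine setLIntegral_mono (by fun_prop) fun x hx => ?_
        rw [← ENNReal.ofReal_mul (Real.rpow_nonneg (by positivity) _)]
        exact ENNReal.ofReal_le_ofReal (hpt x hx)
    _ = ENNReal.ofReal ((2*q) ^ q) * ∫⁻ x in Set.Ioo (0:ℝ) 1, ENNReal.ofReal (x ^ (-(1/2):ℝ)) :=
        lintegral_const_mul' _ _ ENNReal.ofReal_ne_top
    _ = ENNReal.ofReal ((2*q) ^ q) * ENNReal.ofReal 2 := by
        rw [← ofReal_integral_eq_lintegral_ofReal hint ?_, hval]
        filter_upwards [ae_restrict_mem measurableSet_Ioo] with x hx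
        exact Real.rpow_nonneg hx.1.le _
    _ = ENNReal.ofReal ((2*q) ^ q * 2) := by
        rw [ENNReal.ofReal_mul (Real.rpow_nonneg (by positivity) _)]

lemma stmt11_lb (m p : ℝ) (hm : 0 < m) (hp : 2 ≤ p) :
    ENNReal.ofReal (Real.exp (-1) * p ^ (1/m)) ≤
      eLpNorm (fun x : ℝ => |Real.log x| ^ (1/m)) (ENNReal.ofReal p)
        (volume.restrict (Set.Ioo (0:ℝ) 1)) := by
  have hp0 : 0 < p := by linarith
  rw [stmt11_key m p hm hp0]
  calc ENNReal.ofReal (Real.exp (-1) * p ^ (1/m))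
      = ENNReal.ofReal ((p ^ (p/m) * Real.exp (-p)) ^ (1/p)) := by
        congr 1
        rw [Real.mul_rpow (Real.rpow_nonneg hp0.le _) (Real.exp_pos _).le,
          ← Real.rpow_mul hp0.le, ← Real.exp_mul,
          show p/m * (1/p) = 1/m by field_simp,
          show -p * (1/p) = -1 by field_simp]
        ring
    _ = ENNReal.ofReal (p ^ (p/m) * Real.exp (-p)) ^ ((1:ℝ)/p) := by
        rw [ENNReal.ofReal_rpow_of_nonneg (by positivity) (by positivity)]
    _ ≤ (∫⁻ x in Set.Ioo (0:ℝ) 1, ENNReal.ofReal (|Real.log x| ^ (p/m))) ^ ((1:ℝ)/p) :=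
        ENNReal.rpow_le_rpow (stmt11_lower_int m p hm hp0) (by positivity)

lemma stmt11_ub (m p : ℝ) (hm : 0 < m) (hp : 2 ≤ p) :
    eLpNorm (fun x : ℝ => |Real.log x| ^ (1/m)) (ENNReal.ofReal p)
        (volume.restrict (Set.Ioo (0:ℝ) 1)) ≤
      ENNReal.ofReal (((2/m) ^ (1/m) * 2 ^ ((1:ℝ)/2)) * p ^ (1/m)) := by
  have hp0 : 0 < p := by linarith
  rw [stmt11_key m p hm hp0]
  calc (∫⁻ x in Set.Ioo (0:ℝ) 1, ENNReal.ofReal (|Real.log x| ^ (p/m))) ^ ((1:ℝ)/p)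
      ≤ ENNReal.ofReal ((2 * (p/m)) ^ (p/m) * 2) ^ ((1:ℝ)/p) :=
        ENNReal.rpow_le_rpow (stmt11_upper_int m p hm hp0) (by positivity)
    _ = ENNReal.ofReal (((2 * (p/m)) ^ (p/m) * 2) ^ ((1:ℝ)/p)) := by
        rw [ENNReal.ofReal_rpow_of_nonneg (by positivity) (by positivity)]
    _ ≤ ENNReal.ofReal (((2/m) ^ (1/m) * 2 ^ ((1:ℝ)/2)) * p ^ (1/m)) := by
        refine ENNReal.ofReal_le_ofReal ?_
        have h1 : ((2 * (p/m)) ^ (p/m) * 2) ^ ((1:ℝ)/p)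
            = (2/m) ^ (1/m) * p ^ (1/m) * 2 ^ ((1:ℝ)/p) := by
          rw [Real.mul_rpow (Real.rpow_nonneg (by positivity) _) (by norm_num),
            ← Real.rpow_mul (by positivity),
            show p/m * (1/p) = 1/m by field_simp,
            show 2 * (p/m) = (2/m) * p by ring,
            Real.mul_rpow (by positivity) hp0.le]
        rw [h1]
        have h2 : (2:ℝ) ^ ((1:ℝ)/p) ≤ 2 ^ ((1:ℝ)/2) :=
          Real.rpow_le_rpow_of_exponent_le (by norm_num)
            (by rw [div_le_div_iff₀ hp0 (by norm_num)]; linarith)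
        calc (2/m) ^ (1/m) * p ^ (1/m) * 2 ^ ((1:ℝ)/p)
            ≤ (2/m) ^ (1/m) * p ^ (1/m) * 2 ^ ((1:ℝ)/2) := by
              refine mul_le_mul_of_nonneg_left h2 (by positivity)
          _ = (2/m) ^ (1/m) * 2 ^ ((1:ℝ)/2) * p ^ (1/m) := by ring

theorem stmt11 (m : ℝ) (hm : 0 < m) :
    ∃ c C : ℝ, 0 < c ∧ c ≤ C ∧
      (∀ p : ℝ, 2 ≤ p →
        ENNReal.ofReal (c * p ^ (1/m)) ≤
            eLpNorm (fun x : ℝ => |Real.log x| ^ (1/m)) (ENNReal.ofReal p)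
              (volume.restrict (Set.Ioo (0:ℝ) 1)) ∧
          eLpNorm (fun x : ℝ => |Real.log x| ^ (1/m)) (ENNReal.ofReal p)
              (volume.restrict (Set.Ioo (0:ℝ) 1)) ≤
            ENNReal.ofReal (C * p ^ (1/m))) ∧
      (⨆ p : {p : ℝ // 2 ≤ p},
          eLpNorm (fun x : ℝ => |Real.log x| ^ (1/m)) (ENNReal.ofReal (p : ℝ))
              (volume.restrict (Set.Ioo (0:ℝ) 1)) /
            ENNReal.ofReal ((p : ℝ) ^ (1/m))) < ⊤ ∧
      ¬ Filter.Tendsto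
          (fun p : ℝ =>
            eLpNorm (fun x : ℝ => |Real.log x| ^ (1/m)) (ENNReal.ofReal p)
                (volume.restrict (Set.Ioo (0:ℝ) 1)) /
              ENNReal.ofReal (p ^ (1/m)))
          Filter.atTop (𝓝 0) := by
  set c : ℝ := Real.exp (-1) with hc
  set C : ℝ := max c ((2/m) ^ (1/m) * 2 ^ ((1:ℝ)/2)) with hC
  have hc0 : 0 < c := Real.exp_pos _
  have hcC : c ≤ C := le_max_left _ _
  have hC0 : 0 ≤ C := le_trans hc0.le hcC
  have hub : ∀ p : ℝ, 2 ≤ p →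
      eLpNorm (fun x : ℝ => |Real.log x| ^ (1/m)) (ENNReal.ofReal p)
          (volume.restrict (Set.Ioo (0:ℝ) 1)) ≤ ENNReal.ofReal (C * p ^ (1/m)) := by
    intro p hp
    refine (stmt11_ub m p hm hp).trans (ENNReal.ofReal_le_ofReal ?_)
    refine mul_le_mul_of_nonneg_right (le_max_right _ _)
      (Real.rpow_nonneg (by linarith) _)
  refine ⟨c, C, hc0, hcC, fun p hp => ⟨stmt11_lb m p hm hp, hub p hp⟩, ?_, ?_⟩
  · refine lt_of_le_of_lt (iSup_le fun p => ?_) (ENNReal.ofReal_lt_top (r := C))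
    refine ENNReal.div_le_of_le_mul ?_
    rw [← ENNReal.ofReal_mul hC0]
    exact hub p p.2
  · intro h
    have hmem : Set.Iio (ENNReal.ofReal c) ∈ 𝓝 (0 : ℝ≥0∞) :=
      isOpen_Iio.mem_nhds (by simp [ENNReal.ofReal_pos.2 hc0])
    have hev := (h.eventually_mem hmem).and (eventually_ge_atTop (2:ℝ))
    obtain ⟨p, hlt, hp⟩ := hev.exists
    have hpos : (0:ℝ) < p ^ (1/m) := Real.rpow_pos_of_pos (by linarith) _
    have hle : ENNReal.ofReal c ≤
        eLpNorm (fun x : ℝ => |Real.log x| ^ (1/m)) (ENNReal.ofReal p)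
            (volume.restrict (Set.Ioo (0:ℝ) 1)) / ENNReal.ofReal (p ^ (1/m)) := by
      rw [ENNReal.le_div_iff_mul_le
        (Or.inl (ne_of_gt (ENNReal.ofReal_pos.2 hpos)))
        (Or.inl ENNReal.ofReal_ne_top), ← ENNReal.ofReal_mul hc0.le]
      exact stmt11_lb m p hm hp
    exact absurd (lt_of_le_of_lt hle hlt) (lt_irrefl _)
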